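/- arXiv:1506.04398 — 4 statements merged into one kernel-verified Lean document; each statement's English description precedes it below -/
import Mathlib

section
/- Let (X,d_X) be a metric space, S ⊆ X, r > 0, and let d_{X_r(S)} be the r-magnification of d_X at S. Then for any two distinct points x,y ∈ S we have d_{X_r(S)}(x,y) ≥ (2r+1)/(2r + diam(S,d_X)) · diam(S, d_{X_r(S)}), provided d_X(x,y) ≥ 1 for all distinct x,y ∈ S and S has finite diameter. -/
/-! On `S` the magnification adds exactly `2r` to every positive distance, so the magnified
diameter is at most `diam S + 2r`, while any two distinct points of `S` are at magnified
distance at least `1 + 2r`. -/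

theorem csSup_pairs_le_add {X : Type*} {S : Set X} {f g : X → X → ℝ} {c : ℝ}
    (hS : S.Nonempty) (hg : BddAbove {t : ℝ | ∃ x ∈ S, ∃ y ∈ S, t = g x y})
    (hfg : ∀ x ∈ S, ∀ y ∈ S, f x y ≤ g x y + c) :
    sSup {t : ℝ | ∃ x ∈ S, ∃ y ∈ S, t = f x y} ≤
      sSup {t : ℝ | ∃ x ∈ S, ∃ y ∈ S, t = g x y} + c := by
  obtain ⟨x, hx⟩ := hS
  refine csSup_le ⟨f x x, x, hx, x, hx, rfl⟩ ?_
  rintro _ ⟨a, ha, b, hb, rfl⟩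
  have hab : g a b ≤ sSup {t : ℝ | ∃ x ∈ S, ∃ y ∈ S, t = g x y} :=
    le_csSup hg ⟨a, ha, b, hb, rfl⟩
  linarith [hfg a ha b hb]

section Magnification

open Classical

variable {X : Type*} [MetricSpace X] {S : Set X} {r : ℝ} {d' : X → X → ℝ}

theorem magnification_le_add (hr : 0 ≤ r)
    (hd' : ∀ x y : X, d' x y =
      if x = y then 0
      else dist x y + r * ((if x ∈ S then 1 else 0) + (if y ∈ S then 1 else 0)))
    (x y : X) : d' x y ≤ dist x y + 2 * r := by
  rw [hd' x y]
  split_ifs <;> nlinarith [dist_nonneg (x := x) (y := y)]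

theorem magnification_eq_of_mem
    (hd' : ∀ x y : X, d' x y =
      if x = y then 0
      else dist x y + r * ((if x ∈ S then 1 else 0) + (if y ∈ S then 1 else 0)))
    {x y : X} (hx : x ∈ S) (hy : y ∈ S) (hxy : x ≠ y) : d' x y = dist x y + 2 * r := by
  rw [hd' x y, if_neg hxy, if_pos hx, if_pos hy]
  ring

end Magnification

open Classical in
/-- Distances in the magnified set `S` are at least `(2r+1)/(2r+diam(S,d_X))` times the
diameter of `S` in the magnified metric. -/
theorem stmt_1 {X : Type*} [MetricSpace X] (S : Set X) (r : ℝ) (hr : 0 < r)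
    (d' : X → X → ℝ)
    (hd' : ∀ x y : X, d' x y =
      if x = y then 0
      else dist x y + r * ((if x ∈ S then 1 else 0) + (if y ∈ S then 1 else 0)))
    (hsep : ∀ x ∈ S, ∀ y ∈ S, x ≠ y → 1 ≤ dist x y)
    (hbdd : BddAbove {t : ℝ | ∃ x ∈ S, ∃ y ∈ S, t = dist x y}) :
    ∀ x ∈ S, ∀ y ∈ S, x ≠ y →
      (2 * r + 1) / (2 * r + sSup {t : ℝ | ∃ x ∈ S, ∃ y ∈ S, t = dist x y}) *
          sSup {t : ℝ | ∃ x ∈ S, ∃ y ∈ S, t = d' x y} ≤ d' x y := by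
  intro x hx y hy hxy
  set D := sSup {t : ℝ | ∃ x ∈ S, ∃ y ∈ S, t = dist x y}
  have hD' : sSup {t : ℝ | ∃ x ∈ S, ∃ y ∈ S, t = d' x y} ≤ D + 2 * r :=
    csSup_pairs_le_add ⟨x, hx⟩ hbdd fun a _ b _ => magnification_le_add hr.le hd' a b
  have hdist : 1 ≤ dist x y := hsep x hx y hy hxy
  have hDpos : 0 < 2 * r + D := by
    linarith [le_csSup hbdd ⟨x, hx, y, hy, rfl⟩]
  calc (2 * r + 1) / (2 * r + D) * sSup {t : ℝ | ∃ x ∈ S, ∃ y ∈ S, t = d' x y}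
      ≤ (2 * r + 1) / (2 * r + D) * (2 * r + D) := by gcongr; linarith
    _ = 2 * r + 1 := div_mul_cancel₀ _ hDpos.ne'
    _ ≤ d' x y := by rw [magnification_eq_of_mem hd' hx hy hxy]; linarith
end

section
/- Let G be an n-vertex graph with edge-expansion φ(G) ≥ φ, and let A, B ⊆ V_G be disjoint. Then the maximal number of pairwise edge-disjoint paths joining A to B is at least φ·min{|A|,|B|}·|E_G|/(2n). -/
open Finset
set_option linter.unusedSectionVars false
set_option maxHeartbeats 2000000

namespace MengerAux
variable {V : Type*} [Fintype V] [DecidableEq V] {G : SimpleGraph V} [DecidableRel G.Adj]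

variable {V : Type*} [Fintype V] [DecidableEq V] {G : SimpleGraph V} [DecidableRel G.Adj]

def dv (F : Finset (V × V)) (v : V) : ℤ :=
  ∑ p ∈ F, ((if p.1 = v then 1 else 0) - (if p.2 = v then 1 else 0))

lemma tele {a b : V} (P : G.Walk a b) (v : V) :
    ((P.darts.map (fun d => ((if d.toProd.1 = v then (1:ℤ) else 0)
        - (if d.toProd.2 = v then 1 else 0)))).sum)
      = (if a = v then 1 else 0) - (if b = v then 1 else 0) := by
  induction P with
  | nil => simp
  | cons h p ih => simp [ih]

lemma sum_dv (F : Finset (V × V)) (C : Finset V) :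
    ∑ v ∈ C, dv F v =
      ((F.filter (fun p => p.1 ∈ C ∧ p.2 ∉ C)).card : ℤ)
        - ((F.filter (fun p => p.1 ∉ C ∧ p.2 ∈ C)).card : ℤ) := by
  simp only [dv]
  rw [Finset.sum_comm]
  have : ∀ p ∈ F, (∑ v ∈ C, ((if p.1 = v then (1:ℤ) else 0) - (if p.2 = v then 1 else 0)))
      = (if p.1 ∈ C ∧ p.2 ∉ C then (1:ℤ) else 0) - (if p.1 ∉ C ∧ p.2 ∈ C then 1 else 0) := by
    intro p _
    rw [Finset.sum_sub_distrib, Finset.sum_ite_eq C p.1 (fun _ => (1:ℤ)),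
      Finset.sum_ite_eq C p.2 (fun _ => (1:ℤ))]
    by_cases h1 : p.1 ∈ C <;> by_cases h2 : p.2 ∈ C <;> simp [h1, h2]
  rw [Finset.sum_congr rfl this, Finset.sum_sub_distrib]
  simp [Finset.sum_boole]

lemma walk_of_rtg {r : V → V → Prop} (hr : ∀ x y, r x y → G.Adj x y) {a b : V}
    (h : Relation.ReflTransGen r a b) :
    ∃ w : G.Walk a b, ∀ d ∈ w.darts, r d.toProd.1 d.toProd.2 := by
  induction h with
  | refl => exact ⟨.nil, by simp⟩
  | tail h1 h2 ih =>
    obtain ⟨w, hw⟩ := ih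
    refine ⟨w.concat (hr _ _ h2), ?_⟩
    intro d hd
    rw [SimpleGraph.Walk.darts_concat, List.concat_eq_append, List.mem_append,
      List.mem_singleton] at hd
    rcases hd with hd | hd
    · exact hw d hd
    · subst hd; exact h2

/-- Over a path (nodup support), the finset of dart-arcs has nodup list and
its divergence telescopes. -/
lemma dv_darts {a b : V} (P : G.Walk a b) (hP : P.IsPath) (v : V) :
    dv ((P.darts.map SimpleGraph.Dart.toProd).toFinset) v
      = (if a = v then 1 else 0) - (if b = v then 1 else 0) := by
  have hnd : (P.darts.map SimpleGraph.Dart.toProd).Nodup := by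
    have he : P.edges.Nodup := hP.isTrail.edges_nodup
    have hd : P.darts.Nodup := by
      have he' : (P.darts.map SimpleGraph.Dart.edge).Nodup := by
        have : P.edges = P.darts.map SimpleGraph.Dart.edge := rfl
        rwa [this] at he
      exact he'.of_map _
    exact hd.map (fun d d' h => SimpleGraph.Dart.ext d d' h)
  rw [dv, List.sum_toFinset _ hnd, List.map_map]
  rw [show ((fun p : V × V => (if p.1 = v then (1:ℤ) else 0) - (if p.2 = v then 1 else 0))
      ∘ SimpleGraph.Dart.toProd)
    = (fun d : G.Dart => (if d.toProd.1 = v then (1:ℤ) else 0)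
        - (if d.toProd.2 = v then 1 else 0)) from rfl]
  exact tele P v

/-- no swap-pairs among darts of a path -/
lemma no_swap_darts {a b : V} (P : G.Walk a b) (hP : P.IsPath) {q : V × V}
    (hq : q ∈ P.darts.map SimpleGraph.Dart.toProd) :
    (q.2, q.1) ∉ P.darts.map SimpleGraph.Dart.toProd := by
  intro hq'
  obtain ⟨d, hd, hdq⟩ := List.mem_map.mp hq
  obtain ⟨d', hd', hdq'⟩ := List.mem_map.mp hq'
  have he : d.edge = d'.edge := by
    simp only [SimpleGraph.Dart.edge, hdq, hdq']
    exact (Sym2.eq_swap)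
  have hinj := List.inj_on_of_nodup_map (f := SimpleGraph.Dart.edge)
    (by have : P.edges = P.darts.map SimpleGraph.Dart.edge := rfl
        rw [← this]; exact hP.isTrail.edges_nodup)
  have : d = d' := hinj hd hd' he
  rw [this] at hdq
  have : q.1 = q.2 := by
    have := hdq.symm.trans hdq'
    exact (Prod.ext_iff.mp this).1
  have hadj := d'.adj
  rw [hdq'] at hadj
  exact G.irrefl (this ▸ hadj)

lemma augment (A B : Finset V) (hAB : Disjoint A B) (F : Finset (V×V)) (k : ℕ)
    (h1 : ∀ p ∈ F, G.Adj p.1 p.2) (h2 : ∀ p ∈ F, (p.2,p.1) ∉ F)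
    (h3 : ∀ v, v ∉ A → v ∉ B → dv F v = 0)
    (h4 : ∀ a ∈ A, 0 ≤ dv F a) (h5 : ∀ b ∈ B, dv F b ≤ 0)
    (h6 : ∑ a ∈ A, dv F a = (k : ℤ))
    (hcut : ∀ C : Finset V, A ⊆ C → (∀ b ∈ B, b ∉ C) →
      k < ((C ×ˢ Cᶜ).filter (fun p => G.Adj p.1 p.2)).card) :
    ∃ F' : Finset (V×V), (∀ p ∈ F', G.Adj p.1 p.2) ∧ (∀ p ∈ F', (p.2,p.1) ∉ F') ∧
      (∀ v, v ∉ A → v ∉ B → dv F' v = 0) ∧ (∀ a ∈ A, 0 ≤ dv F' a) ∧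
      (∀ b ∈ B, dv F' b ≤ 0) ∧ (∑ a ∈ A, dv F' a = (k : ℤ) + 1) := by
  classical
  set r : V → V → Prop := fun x y => G.Adj x y ∧ (x,y) ∉ F with hr
  set C : Finset V := univ.filter (fun v => ∃ a ∈ A, Relation.ReflTransGen r a v) with hC
  have hAC : A ⊆ C := fun a ha => mem_filter.mpr ⟨mem_univ _, a, ha, Relation.ReflTransGen.refl⟩
  have hclosed : ∀ x ∈ C, ∀ y, r x y → y ∈ C := by
    intro x hx y hxy
    obtain ⟨-, a, ha, hrtg⟩ := mem_filter.mp hx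
    exact mem_filter.mpr ⟨mem_univ _, a, ha, hrtg.tail hxy⟩
  by_cases hB : ∃ b ∈ B, b ∈ C
  · obtain ⟨b, hbB, hbC⟩ := hB
    obtain ⟨-, a, haA, hrtg⟩ := mem_filter.mp hbC
    obtain ⟨w, hw⟩ := walk_of_rtg (fun x y h => h.1) hrtg
    set P := w.bypass with hPdef
    have hP : P.IsPath := w.bypass_isPath
    have hPd : ∀ d ∈ P.darts, r d.toProd.1 d.toProd.2 :=
      fun d hd => hw d (w.darts_bypass_subset hd)
    set Dp : Finset (V × V) := (P.darts.map SimpleGraph.Dart.toProd).toFinset with hDp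
    have hDpr : ∀ q ∈ Dp, r q.1 q.2 := by
      intro q hq
      obtain ⟨d, hd, rfl⟩ := List.mem_map.mp (List.mem_toFinset.mp hq)
      exact hPd d hd
    have hDpF : ∀ q ∈ Dp, q ∉ F := fun q hq => (hDpr q hq).2
    have hDpswap : ∀ q ∈ Dp, (q.2, q.1) ∉ Dp := by
      intro q hq hq'
      exact no_swap_darts P hP (List.mem_toFinset.mp hq) (List.mem_toFinset.mp hq')
    set Dcan : Finset (V × V) := Dp.filter (fun q => (q.2,q.1) ∈ F) with hDcan
    set Dadd : Finset (V × V) := Dp.filter (fun q => (q.2,q.1) ∉ F) with hDadd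
    set Rf : Finset (V × V) := Dcan.image Prod.swap with hRf
    have hRfF : Rf ⊆ F := by
      intro q hq
      obtain ⟨p, hp, rfl⟩ := mem_image.mp hq
      exact (mem_filter.mp hp).2
    set F' : Finset (V × V) := (F \ Rf) ∪ Dadd with hF'
    -- membership characterization helpers
    have hswapinj : Function.Injective (Prod.swap : V × V → V × V) := Prod.swap_injective
    have hDaddF : Disjoint Dadd (F \ Rf) := by
      rw [disjoint_left]
      intro q hq hq2
      exact hDpF q (mem_filter.mp hq).1 (mem_sdiff.mp hq2).1
    -- divergence computation
    have hdv : ∀ v, dv F' v = dv F v + (if a = v then 1 else 0) - (if b = v then 1 else 0) := by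
      intro v
      have e1 : dv F' v = dv (F \ Rf) v + dv Dadd v := by
        rw [hF', dv, Finset.sum_union hDaddF.symm]; rfl
      have e2 : dv (F \ Rf) v = dv F v - dv Rf v := by
        have h := Finset.sum_sdiff (f := fun p : V × V =>
          ((if p.1 = v then (1:ℤ) else 0) - (if p.2 = v then 1 else 0))) hRfF
        simp only [dv]
        linarith
      have e3 : dv Rf v = - dv Dcan v := by
        rw [hRf, dv, Finset.sum_image (fun x _ y _ h => hswapinj h), dv, ← Finset.sum_neg_distrib]
        exact Finset.sum_congr rfl (fun q _ => by simp [Prod.swap])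
      have e4 : dv Dcan v + dv Dadd v = dv Dp v := by
        rw [dv, dv, dv, ← Finset.sum_union]
        · congr 1
          rw [hDcan, hDadd, Finset.filter_union_filter_not_eq]
        · rw [hDcan, hDadd]
          exact disjoint_filter_filter_not Dp Dp _
      have e5 : dv Dp v = (if a = v then 1 else 0) - (if b = v then 1 else 0) := dv_darts P hP v
      rw [e1, e2, e3] at *
      linarith [e4, e5]
    have hab : a ≠ b := fun h => disjoint_left.mp hAB haA (h ▸ hbB)
    refine ⟨F', ?_, ?_, ?_, ?_, ?_, ?_⟩
    · intro p hp
      rcases mem_union.mp hp with h | h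
      · exact h1 p (mem_sdiff.mp h).1
      · exact (hDpr p (mem_filter.mp h).1).1
    · intro p hp hswap
      rcases mem_union.mp hp with h | h
      · rcases mem_union.mp hswap with h' | h'
        · exact h2 p (mem_sdiff.mp h).1 (mem_sdiff.mp h').1
        · -- (p.2,p.1) ∈ Dadd ⊆ Dp, so p ∈ Rf? p ∈ Dcan.image swap
          have hpDp : (p.2, p.1) ∈ Dp := (mem_filter.mp h').1
          have : p ∈ Rf := by
            rw [hRf, mem_image]
            exact ⟨(p.2,p.1), mem_filter.mpr ⟨hpDp, by simpa using (mem_sdiff.mp h).1⟩, rfl⟩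
          exact (mem_sdiff.mp h).2 this
      · rcases mem_union.mp hswap with h' | h'
        · -- p ∈ Dadd (swap ∉ F), but (p.2,p.1) ∈ F
          exact (mem_filter.mp h).2 (mem_sdiff.mp h').1
        · exact hDpswap p (mem_filter.mp h).1 (mem_filter.mp h').1
    · intro v hvA hvB
      have hva : a ≠ v := fun h => hvA (h ▸ haA)
      have hvb : b ≠ v := fun h => hvB (h ▸ hbB)
      rw [hdv v, h3 v hvA hvB, if_neg hva, if_neg hvb]; ring
    · intro x hx
      rw [hdv x]
      have : (if b = x then (1:ℤ) else 0) = 0 := by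
        rw [if_neg]; intro h; exact disjoint_left.mp hAB hx (h ▸ hbB)
      rw [this]
      have := h4 x hx
      split_ifs <;> linarith
    · intro y hy
      rw [hdv y]
      have : (if a = y then (1:ℤ) else 0) = 0 := by
        rw [if_neg]; intro h; exact disjoint_left.mp hAB (h ▸ haA) hy
      rw [this]
      have := h5 y hy
      split_ifs <;> linarith
    · rw [Finset.sum_congr rfl (fun x _ => hdv x)]
      have hbA : ∀ x ∈ A, (if b = x then (1:ℤ) else 0) = 0 := by
        intro x hx
        rw [if_neg]; intro h; exact disjoint_left.mp hAB hx (h ▸ hbB)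
      simp only [sub_eq_add_neg]
      rw [Finset.sum_add_distrib, Finset.sum_add_distrib, h6,
        Finset.sum_ite_eq A a (fun _ => (1:ℤ)), if_pos haA]
      have : ∑ x ∈ A, -(if b = x then (1:ℤ) else 0) = 0 := by
        rw [Finset.sum_congr rfl (fun x hx => by rw [hbA x hx])]; simp
      rw [this]; ring
  · push_neg at hB
    exfalso
    have hkey := hcut C hAC hB
    have hsub : (C ×ˢ Cᶜ).filter (fun p => G.Adj p.1 p.2)
        ⊆ F.filter (fun p => p.1 ∈ C ∧ p.2 ∉ C) := by
      intro p hp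
      obtain ⟨hmem, hadj⟩ := mem_filter.mp hp
      obtain ⟨hp1, hp2⟩ := mem_product.mp hmem
      have hp2' : p.2 ∉ C := by simpa using hp2
      have hpF : p ∈ F := by
        by_contra hpF
        exact hp2' (hclosed p.1 hp1 p.2 ⟨hadj, by simpa using hpF⟩)
      exact mem_filter.mpr ⟨hpF, hp1, hp2'⟩
    have hIn : F.filter (fun p => p.1 ∉ C ∧ p.2 ∈ C) = ∅ := by
      rw [Finset.filter_eq_empty_iff]
      rintro p hp ⟨hp1, hp2⟩
      apply hp1
      refine hclosed p.2 hp2 p.1 ⟨(h1 p hp).symm, ?_⟩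
      exact h2 p hp
    have hsumC : ∑ v ∈ C, dv F v = (k : ℤ) := by
      rw [← h6]
      symm
      apply Finset.sum_subset hAC
      intro v hvC hvA
      exact h3 v hvA (fun hvB => hB v hvB hvC)
    rw [sum_dv F C, hIn] at hsumC
    simp at hsumC
    have hle := Finset.card_le_card hsub
    omega

lemma exists_flow (A B : Finset V) (hAB : Disjoint A B) (k : ℕ)
    (hcut : ∀ C : Finset V, A ⊆ C → (∀ b ∈ B, b ∉ C) →
      k ≤ ((C ×ˢ Cᶜ).filter (fun p => G.Adj p.1 p.2)).card) :
    ∃ F : Finset (V×V), (∀ p ∈ F, G.Adj p.1 p.2) ∧ (∀ p ∈ F, (p.2,p.1) ∉ F) ∧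
      (∀ v, v ∉ A → v ∉ B → dv F v = 0) ∧ (∀ a ∈ A, 0 ≤ dv F a) ∧
      (∀ b ∈ B, dv F b ≤ 0) ∧ (∑ a ∈ A, dv F a = (k : ℤ)) := by
  induction k with
  | zero =>
    refine ⟨∅, by simp, by simp, ?_, ?_, ?_, ?_⟩ <;> simp [dv]
  | succ j ih =>
    obtain ⟨F, h1, h2, h3, h4, h5, h6⟩ := ih (fun C hC hBC => le_of_lt
      (lt_of_lt_of_le (Nat.lt_succ_self j) (hcut C hC hBC)))
    obtain ⟨F', g1, g2, g3, g4, g5, g6⟩ := augment A B hAB F j h1 h2 h3 h4 h5 h6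
      (fun C hC hBC => lt_of_lt_of_le (Nat.lt_succ_self j) (hcut C hC hBC))
    exact ⟨F', g1, g2, g3, g4, g5, by rw [g6]; push_cast; ring⟩

lemma decompose (A B : Finset V) (hAB : Disjoint A B) :
    ∀ N (F : Finset (V×V)) (k : ℕ), F.card ≤ N →
    (∀ p ∈ F, G.Adj p.1 p.2) → (∀ p ∈ F, (p.2,p.1) ∉ F) →
    (∀ v, v ∉ A → v ∉ B → dv F v = 0) → (∀ a ∈ A, 0 ≤ dv F a) → (∀ b ∈ B, dv F b ≤ 0) →
    (∑ a ∈ A, dv F a = (k:ℤ)) →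
    ∃ (u w : Fin k → V) (p : ∀ i, G.Walk (u i) (w i)),
      (∀ i, u i ∈ A) ∧ (∀ i, w i ∈ B) ∧
      (∀ i j, i ≠ j → ∀ e, e ∈ (p i).edges → e ∉ (p j).edges) ∧
      (∀ i, ∀ e ∈ (p i).edges, ∃ q ∈ F, Sym2.mk q.1 q.2 = e) := by
  classical
  intro N
  induction N with
  | zero =>
    intro F k hcard h1 h2 h3 h4 h5 h6
    have hF : F = ∅ := card_eq_zero.mp (Nat.le_zero.mp hcard)
    subst hF
    have : (k : ℤ) = 0 := by rw [← h6]; simp [dv]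
    have hk : k = 0 := by exact_mod_cast this
    subst hk
    exact ⟨Fin.elim0, Fin.elim0, fun i => i.elim0, fun i => i.elim0, fun i => i.elim0,
      fun i => i.elim0, fun i => i.elim0⟩
  | succ n ih =>
    intro F k hcard h1 h2 h3 h4 h5 h6
    match k with
    | 0 =>
      exact ⟨Fin.elim0, Fin.elim0, fun i => i.elim0, fun i => i.elim0, fun i => i.elim0,
        fun i => i.elim0, fun i => i.elim0⟩
    | (j+1) =>
      -- find a source with positive divergence
      have hexa : ∃ a ∈ A, 0 < dv F a := by
        by_contra hno
        push_neg at hno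
        have : ∑ a ∈ A, dv F a ≤ 0 :=
          Finset.sum_nonpos (fun a ha => hno a ha)
        omega
      obtain ⟨a, haA, hapos⟩ := hexa
      set s : V → V → Prop := fun x y => (x, y) ∈ F with hs
      set R : Finset V := univ.filter (fun v => Relation.ReflTransGen s a v) with hR
      have haR : a ∈ R := mem_filter.mpr ⟨mem_univ _, Relation.ReflTransGen.refl⟩
      have hclosed : ∀ x ∈ R, ∀ y, s x y → y ∈ R := by
        intro x hx y hxy
        exact mem_filter.mpr ⟨mem_univ _, (mem_filter.mp hx).2.tail hxy⟩
      have hOut : F.filter (fun p => p.1 ∈ R ∧ p.2 ∉ R) = ∅ := by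
        rw [Finset.filter_eq_empty_iff]
        rintro p hp ⟨hp1, hp2⟩
        exact hp2 (hclosed p.1 hp1 p.2 hp)
      have hsumR : ∑ v ∈ R, dv F v ≤ 0 := by
        rw [sum_dv F R, hOut]
        simp
      have hexb : ∃ b ∈ R, dv F b < 0 := by
        by_contra hno
        push_neg at hno
        have : dv F a ≤ ∑ v ∈ R, dv F v :=
          Finset.single_le_sum (fun v hv => hno v hv) haR
        omega
      obtain ⟨b, hbR, hbneg⟩ := hexb
      have hbB : b ∈ B := by
        by_contra hbB
        rcases Classical.em (b ∈ A) with h | h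
        · exact absurd (h4 b h) (by omega)
        · exact absurd (h3 b h hbB) (by omega)
      have hab : a ≠ b := fun h => disjoint_left.mp hAB haA (h ▸ hbB)
      obtain ⟨w0, hw0⟩ := walk_of_rtg (fun x y h => h1 _ h) (mem_filter.mp hbR).2
      set P := w0.bypass with hPdef
      have hP : P.IsPath := w0.bypass_isPath
      have hPd : ∀ d ∈ P.darts, d.toProd ∈ F :=
        fun d hd => hw0 d (w0.darts_bypass_subset hd)
      set Dp : Finset (V × V) := (P.darts.map SimpleGraph.Dart.toProd).toFinset with hDp
      set F' : Finset (V × V) := F.filter (fun q => Sym2.mk q.1 q.2 ∉ P.edges) with hF'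
      have hF'sub : F' ⊆ F := filter_subset _ _
      have hsdiff : F \ F' = Dp := by
        ext q
        simp only [mem_sdiff, hF', mem_filter, hDp, List.mem_toFinset, List.mem_map, not_and,
          not_not]
        constructor
        · rintro ⟨hqF, himp⟩
          have hqe : Sym2.mk q.1 q.2 ∈ P.edges := himp hqF
          rw [SimpleGraph.Walk.edges_eq_map_darts] at hqe
          obtain ⟨d, hd, hde⟩ := List.mem_map.mp hqe
          have : d.toProd = q ∨ d.toProd = q.swap := by
            have := hde
            rw [SimpleGraph.Dart.edge] at this
            rcases Sym2.eq_iff.mp (by exact this) with ⟨hl, hr⟩ | ⟨hl, hr⟩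
            · left; exact Prod.ext hl hr
            · right; exact Prod.ext hl hr
          rcases this with h | h
          · exact ⟨d, hd, h⟩
          · exfalso
            have : q.swap ∈ F := h ▸ hPd d hd
            exact h2 q hqF this
        · rintro ⟨d, hd, rfl⟩
          refine ⟨hPd d hd, fun _ => ?_⟩
          rw [SimpleGraph.Walk.edges_eq_map_darts]
          exact List.mem_map.mpr ⟨d, hd, rfl⟩
      have hdv : ∀ v, dv F' v = dv F v - ((if a = v then 1 else 0) - (if b = v then 1 else 0)) := by
        intro v
        have hsd := Finset.sum_sdiff (f := fun p : V × V =>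
          ((if p.1 = v then (1:ℤ) else 0) - (if p.2 = v then 1 else 0))) hF'sub
        have : dv (F \ F') v = (if a = v then 1 else 0) - (if b = v then 1 else 0) := by
          rw [hsdiff]; exact dv_darts P hP v
        simp only [dv] at *
        linarith
      -- strict card decrease
      have hne : P.darts ≠ [] := by
        intro hnil
        have : P.length = 0 := by
          rw [← SimpleGraph.Walk.length_darts, hnil]; rfl
        exact hab (P.eq_of_length_eq_zero this)
      have hcard' : F'.card ≤ n := by
        obtain ⟨d, hd⟩ := List.exists_mem_of_ne_nil _ hne
        have hdF : d.toProd ∈ F \ F' := by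
          rw [hsdiff, hDp]
          exact List.mem_toFinset.mpr (List.mem_map.mpr ⟨d, hd, rfl⟩)
        have : F' ⊂ F := by
          refine ⟨hF'sub, fun hsub => ?_⟩
          have := hsub (mem_sdiff.mp hdF).1
          exact (mem_sdiff.mp hdF).2 this
        have := Finset.card_lt_card this
        omega
      -- invariants for F'
      have g3 : ∀ v, v ∉ A → v ∉ B → dv F' v = 0 := by
        intro v hvA hvB
        rw [hdv v, h3 v hvA hvB, if_neg (fun h : a = v => hvA (h ▸ haA)),
          if_neg (fun h : b = v => hvB (h ▸ hbB))]
        ring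
      have g4 : ∀ x ∈ A, 0 ≤ dv F' x := by
        intro x hx
        rw [hdv x, if_neg (fun h : b = x => disjoint_left.mp hAB hx (h ▸ hbB))]
        have := h4 x hx
        by_cases hax : a = x
        · rw [if_pos hax]; rw [← hax] at *; omega
        · rw [if_neg hax]; omega
      have g5 : ∀ y ∈ B, dv F' y ≤ 0 := by
        intro y hy
        rw [hdv y, if_neg (fun h : a = y => disjoint_left.mp hAB (h ▸ haA) hy)]
        have := h5 y hy
        by_cases hby : b = y
        · rw [if_pos hby]; rw [← hby] at *; omega
        · rw [if_neg hby]; omega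
      have g6 : ∑ x ∈ A, dv F' x = (j : ℤ) := by
        rw [Finset.sum_congr rfl (fun x _ => hdv x)]
        have hbA : ∀ x ∈ A, (if b = x then (1:ℤ) else 0) = 0 := by
          intro x hx
          exact if_neg (fun h : b = x => disjoint_left.mp hAB hx (h ▸ hbB))
        have e1 : ∑ x ∈ A, (dv F x - ((if a = x then (1:ℤ) else 0) - (if b = x then 1 else 0)))
            = (∑ x ∈ A, dv F x) - (∑ x ∈ A, (if a = x then (1:ℤ) else 0))
              + ∑ x ∈ A, (if b = x then (1:ℤ) else 0) := by
          rw [Finset.sum_sub_distrib, Finset.sum_sub_distrib]; ring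
        rw [e1, h6, Finset.sum_ite_eq A a (fun _ => (1:ℤ)), if_pos haA,
          Finset.sum_congr rfl hbA]
        push_cast
        simp
      obtain ⟨u, ww, p, hu, hww, hdisj, hmem⟩ :=
        ih F' j hcard' (fun q hq => h1 q (hF'sub hq))
          (fun q hq hq' => h2 q (hF'sub hq) (hF'sub hq')) g3 g4 g5 g6
      refine ⟨Fin.cons a u, Fin.cons b ww, Fin.cases P p, ?_, ?_, ?_, ?_⟩
      · exact Fin.cases haA hu
      · exact Fin.cases hbB hww
      · intro i j' hij e hei hej
        induction i using Fin.cases with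
        | zero =>
          induction j' using Fin.cases with
          | zero => exact hij rfl
          | succ j' =>
            simp only [Fin.cases_zero, Fin.cases_succ] at hei hej
            obtain ⟨q, hqF', hqe⟩ := hmem j' e hej
            exact (mem_filter.mp hqF').2 (hqe ▸ hei)
        | succ i =>
          induction j' using Fin.cases with
          | zero =>
            simp only [Fin.cases_zero, Fin.cases_succ] at hei hej
            obtain ⟨q, hqF', hqe⟩ := hmem i e hei
            exact absurd hej (hqe ▸ (mem_filter.mp hqF').2)
          | succ j' =>
            simp only [Fin.cases_succ] at hei hej ⊢
            exact hdisj i j' (fun h => hij (by rw [h])) e hei hej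
      · intro i
        induction i using Fin.cases with
        | zero =>
          intro e he
          simp only [Fin.cases_zero] at he
          rw [SimpleGraph.Walk.edges_eq_map_darts] at he
          obtain ⟨d, hd, rfl⟩ := List.mem_map.mp he
          exact ⟨d.toProd, hPd d hd, rfl⟩
        | succ i =>
          intro e he
          simp only [Fin.cases_succ] at he
          obtain ⟨q, hq, hqe⟩ := hmem i e he
          exact ⟨q, hF'sub hq, hqe⟩

end MengerAux
open Classical in
/-- In a graph with edge-expansion at least `φ`, the maximal number of pairwise
edge-disjoint paths joining two disjoint vertex sets `A` and `B` is at least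
`φ·min(|A|,|B|)·|E|/(2n)`. -/
theorem stmt_6 {V : Type*} [Fintype V] (G : SimpleGraph V) [DecidableRel G.Adj]
    (φ : ℝ) (hφ : 0 < φ)
    (hexp : ∀ S : Finset V,
      φ * (S.card : ℝ) * ((Fintype.card V : ℝ) - (S.card : ℝ)) / (Fintype.card V : ℝ) ^ 2 *
          (G.edgeFinset.card : ℝ) ≤
        ∑ x ∈ S, ∑ y ∈ Sᶜ, (if G.Adj x y then (1 : ℝ) else 0))
    (A B : Finset V) (hAB : Disjoint A B) :
    ∃ m : ℕ,
      φ * (min A.card B.card : ℝ) * (G.edgeFinset.card : ℝ) / (2 * (Fintype.card V : ℝ)) ≤ m ∧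
      ∃ (u v : Fin m → V) (p : ∀ i, G.Walk (u i) (v i)),
        (∀ i, u i ∈ A) ∧ (∀ i, v i ∈ B) ∧
        (∀ i j, i ≠ j → ∀ e, e ∈ (p i).edges → e ∉ (p j).edges) := by
  classical
  set n : ℕ := Fintype.card V with hn
  by_cases hmin : min A.card B.card = 0
  · refine ⟨0, ?_, Fin.elim0, Fin.elim0, fun i => i.elim0, fun i => i.elim0, fun i => i.elim0,
      fun i => i.elim0⟩
    rw [← Nat.cast_min, hmin]
    simp
  · have hA : 0 < A.card := lt_of_lt_of_le (Nat.pos_of_ne_zero hmin) (min_le_left _ _)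
    have hB : 0 < B.card := lt_of_lt_of_le (Nat.pos_of_ne_zero hmin) (min_le_right _ _)
    have hnpos : 0 < n := by
      obtain ⟨a, ha⟩ := Finset.card_pos.mp hA
      exact Fintype.card_pos_iff.mpr ⟨a⟩
    set mn : ℕ := min A.card B.card with hmn
    set E : ℝ := (G.edgeFinset.card : ℝ) with hE
    have hEnn : 0 ≤ E := Nat.cast_nonneg _
    set val : ℝ := φ * (mn : ℝ) * E / (2 * (n : ℝ)) with hval
    set k0 : ℕ := ⌈val⌉₊ with hk0
    -- the cut bound
    have hcut : ∀ C : Finset V, A ⊆ C → (∀ b ∈ B, b ∉ C) →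
        k0 ≤ ((C ×ˢ Cᶜ).filter (fun p => G.Adj p.1 p.2)).card := by
      intro C hAC hBC
      rw [hk0]
      apply Nat.ceil_le.mpr
      set c : ℕ := C.card with hc
      have hcA : A.card ≤ c := Finset.card_le_card hAC
      have hBCc : B ⊆ Cᶜ := fun b hb => Finset.mem_compl.mpr (hBC b hb)
      have hcB : B.card ≤ n - c := by
        have := Finset.card_le_card hBCc
        rwa [Finset.card_compl] at this
      have hcn : c ≤ n := Finset.card_le_univ C
      -- the sum in hexp equals the cut cardinality
      have hsum : ∑ x ∈ C, ∑ y ∈ Cᶜ, (if G.Adj x y then (1:ℝ) else 0)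
          = (((C ×ˢ Cᶜ).filter (fun p => G.Adj p.1 p.2)).card : ℝ) := by
        rw [← Finset.sum_product', Finset.sum_boole]
      have hexpC := hexp C
      rw [hsum, ← hc] at hexpC
      refine le_trans ?_ hexpC
      rw [hval]
      -- reduce to: mn * n ≤ 2 * c * (n - c)  (real)
      have h1 : (mn : ℝ) ≤ (c : ℝ) := by
        exact_mod_cast le_trans (min_le_left _ _) hcA
      have h2 : (mn : ℝ) ≤ (n : ℝ) - (c : ℝ) := by
        have : mn ≤ n - c := le_trans (min_le_right _ _) hcB
        have h3 : (mn:ℝ) ≤ ((n - c : ℕ) : ℝ) := by exact_mod_cast this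
        rwa [Nat.cast_sub hcn] at h3
      have hnR : (0:ℝ) < (n : ℝ) := by exact_mod_cast hnpos
      have key : (mn : ℝ) * n ≤ 2 * ((c:ℝ) * ((n:ℝ) - c)) := by
        nlinarith [mul_nonneg (sub_nonneg.mpr h1) (sub_nonneg.mpr h2),
          Nat.cast_nonneg (α := ℝ) mn]
      rw [div_le_iff₀ (by positivity : (0:ℝ) < 2 * (n:ℝ))]
      have hrw : φ * (c:ℝ) * ((n:ℝ) - c) / (n:ℝ)^2 * E * (2 * (n:ℝ))
          = φ * E * (2 * ((c:ℝ) * ((n:ℝ) - c))) / (n:ℝ) := by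
        field_simp
      rw [hrw, le_div_iff₀ hnR]
      have hkey2 := mul_le_mul_of_nonneg_left key (mul_nonneg hφ.le hEnn)
      nlinarith [hkey2]
    obtain ⟨F, h1, h2, h3, h4, h5, h6⟩ := MengerAux.exists_flow (G := G) A B hAB k0 hcut
    obtain ⟨u, w, p, hu, hw, hdisj, -⟩ :=
      MengerAux.decompose (G := G) A B hAB F.card F k0 le_rfl h1 h2 h3 h4 h5 h6
    refine ⟨k0, ?_, u, w, p, hu, hw, hdisj⟩
    have hcast : ((A.card : ℝ) ⊓ (B.card : ℝ)) = ((mn : ℕ) : ℝ) := by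
      rw [hmn, Nat.cast_min]
    rw [hcast]
    exact Nat.le_ceil val
end

section
/- Let α ∈ (1/2, 1] and let r, s > 0 satisfy (2α)^{2α}·s·(2r)^{2α−1} ≥ ((2α)^{2α/(2α−1)} − 1)^{2α−1}. Define d on 𝔽₂ⁿ × {0,1} by: d((x,1),(y,1)) = min{ s‖x−y‖₁, 2r + ‖x−y‖₁^{1/(2α)} }; d((x,0),(y,0)) = ‖x−y‖₁^{1/(2α)}; and d((x,i),(y,j)) = r + min{ s‖x−y‖₁, ‖x−y‖₁^{1/(2α)} } when i ≠ j. Then d is a metric on 𝔽₂ⁿ × {0,1}. -/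
lemma my_subaddP {p a b : ℝ} (hp0 : 0 ≤ p) (hp1 : p ≤ 1) (ha : 0 ≤ a) (hb : 0 ≤ b) :
    (a + b) ^ p ≤ a ^ p + b ^ p := by
  have h := NNReal.rpow_add_le_add_rpow ⟨a, ha⟩ ⟨b, hb⟩ hp0 hp1
  have h2 := NNReal.coe_le_coe.2 h
  push_cast at h2
  convert h2 using 2 <;> rfl

lemma my_bern {p s a b : ℝ} (hp1 : p ≤ 1) (ha : 0 < a) (hb : 0 ≤ b)
    (hab : a ^ p ≤ s * a) : (a + b) ^ p ≤ a ^ p + s * b := by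
  have h1 : a + b = a * (1 + b / a) := by field_simp
  have h2 : (1:ℝ) ≤ 1 + b / a := by
    have : 0 ≤ b / a := div_nonneg hb ha.le
    linarith
  have hap : 0 ≤ a ^ p := Real.rpow_nonneg ha.le p
  calc (a + b) ^ p = a ^ p * (1 + b / a) ^ p := by
        rw [h1, Real.mul_rpow ha.le (by linarith)]
    _ ≤ a ^ p * (1 + b / a) := by
        have := Real.rpow_le_rpow_of_exponent_le h2 hp1
        rw [Real.rpow_one] at this
        exact mul_le_mul_of_nonneg_left this hap
    _ = a ^ p + (a ^ p / a) * b := by field_simp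
    _ ≤ a ^ p + s * b := by
        have : a ^ p / a ≤ s := (div_le_iff₀ ha).2 (by linarith [hab])
        nlinarith [this, hb]

lemma my_Gsub {p s a b : ℝ} (hp0 : 0 < p) (hp1 : p ≤ 1) (ha : 0 ≤ a) (hb : 0 ≤ b) :
    min (s * (a + b)) ((a + b) ^ p) ≤
      min (s * a) (a ^ p) + min (s * b) (b ^ p) := by
  rcases le_or_gt (s * a) (a ^ p) with h1 | h1 <;>
    rcases le_or_gt (s * b) (b ^ p) with h2 | h2
  · rw [min_eq_left h1, min_eq_left h2]
    exact le_trans (min_le_left _ _) (by ring_nf; linarith)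
  · rw [min_eq_left h1, min_eq_right h2.le]
    rcases eq_or_lt_of_le hb with rfl | hb'
    · simp only [add_zero]
      have : (0:ℝ) ^ p = 0 := Real.zero_rpow (ne_of_gt hp0)
      rw [this]
      linarith [min_le_left (s * a) (a ^ p)]
    · have hb0 : b ^ p ≤ s * b := h2.le
      have := my_bern hp1 hb' ha hb0
      calc min (s * (a + b)) ((a + b) ^ p) ≤ (a + b) ^ p := min_le_right _ _
        _ = (b + a) ^ p := by ring_nf
        _ ≤ b ^ p + s * a := this
        _ = s * a + b ^ p := by ring
  · rw [min_eq_right h1.le, min_eq_left h2]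
    rcases eq_or_lt_of_le ha with rfl | ha'
    · simp only [zero_add]
      have : (0:ℝ) ^ p = 0 := Real.zero_rpow (ne_of_gt hp0)
      rw [this]
      linarith [min_le_left (s * b) (b ^ p)]
    · have := my_bern hp1 ha' hb h1.le
      calc min (s * (a + b)) ((a + b) ^ p) ≤ (a + b) ^ p := min_le_right _ _
        _ ≤ a ^ p + s * b := this
  · rw [min_eq_right h1.le, min_eq_right h2.le]
    exact le_trans (min_le_right _ _) (my_subaddP hp0.le hp1 ha hb)

lemma my_Hsub {p s r a b : ℝ} (hp0 : 0 < p) (hp1 : p ≤ 1) (hr : 0 < r)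
    (ha : 0 ≤ a) (hb : 0 ≤ b) :
    min (s * (a + b)) (2*r + (a + b) ^ p) ≤
      min (s * a) (2*r + a ^ p) + min (s * b) (2*r + b ^ p) := by
  rcases le_or_gt (s * a) (2*r + a ^ p) with h1 | h1 <;>
    rcases le_or_gt (s * b) (2*r + b ^ p) with h2 | h2
  · rw [min_eq_left h1, min_eq_left h2]
    exact le_trans (min_le_left _ _) (by ring_nf; linarith)
  · rw [min_eq_left h1, min_eq_right h2.le]
    have hb' : 0 < b := by
      rcases eq_or_lt_of_le hb with rfl | hb'
      · simp only [mul_zero] at h2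
        nlinarith [Real.zero_rpow (ne_of_gt hp0)]
      · exact hb'
    have hb0 : b ^ p ≤ s * b := by nlinarith
    have := my_bern hp1 hb' ha hb0
    calc min (s * (a + b)) (2*r + (a + b) ^ p) ≤ 2*r + (a + b) ^ p := min_le_right _ _
      _ = 2*r + (b + a) ^ p := by ring_nf
      _ ≤ 2*r + (b ^ p + s * a) := by linarith
      _ = s * a + (2*r + b ^ p) := by ring
  · rw [min_eq_right h1.le, min_eq_left h2]
    have ha' : 0 < a := by
      rcases eq_or_lt_of_le ha with rfl | ha'
      · simp only [mul_zero] at h1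
        nlinarith [Real.zero_rpow (ne_of_gt hp0)]
      · exact ha'
    have ha0 : a ^ p ≤ s * a := by nlinarith
    have := my_bern hp1 ha' hb ha0
    calc min (s * (a + b)) (2*r + (a + b) ^ p) ≤ 2*r + (a + b) ^ p := min_le_right _ _
      _ ≤ 2*r + (a ^ p + s * b) := by linarith
      _ = (2*r + a ^ p) + s * b := by ring
  · rw [min_eq_right h1.le, min_eq_right h2.le]
    have := my_subaddP hp0.le hp1 ha hb
    calc min (s * (a + b)) (2*r + (a + b) ^ p) ≤ 2*r + (a + b) ^ p := min_le_right _ _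
      _ ≤ (2*r + a ^ p) + (2*r + b ^ p) := by linarith

lemma my_key (α r s : ℝ) (hα1 : 1/2 < α) (hr : 0 < r) (hs : 0 < s)
    (hrs : ((2*α) ^ (2*α/(2*α-1)) - 1) ^ (2*α-1) ≤ (2*α) ^ (2*α) * s * (2*r) ^ (2*α-1)) :
    ∀ t : ℝ, 0 ≤ t → t ^ (1/(2*α)) ≤ 2*r + s*t := by
  set u : ℝ := 2*α with hudef
  set γ : ℝ := u - 1 with hγdef
  have hu1 : 1 < u := by rw [hudef]; linarith
  have hu0 : 0 < u := by linarith
  have hγ0 : 0 < γ := by rw [hγdef]; linarith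
  have hus0 : 0 < u * s := by positivity
  have e1 : (1:ℝ) ≤ u/γ := by rw [le_div_iff₀ hγ0]; rw [hγdef]; linarith
  have e2 : u ^ (1:ℝ) ≤ u ^ (u/γ) := Real.rpow_le_rpow_of_exponent_le hu1.le e1
  rw [Real.rpow_one] at e2
  have e4 : γ ^ γ ≤ (u ^ (u/γ) - 1) ^ γ :=
    Real.rpow_le_rpow hγ0.le (by linarith) hγ0.le
  have eA : γ ^ γ ≤ u ^ u * s * (2*r) ^ γ := e4.trans hrs
  have huu : u ^ u = u ^ γ * u := by
    have h5 : u ^ u = u ^ (γ + 1) := by rw [show γ + 1 = u from by rw [hγdef]; ring]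
    rw [h5, Real.rpow_add hu0, Real.rpow_one]
  set P : ℝ := (u*s) ^ (-(1/γ)) with hPdef
  have hP0 : 0 ≤ P := Real.rpow_nonneg hus0.le _
  have hB : γ/u * P ≤ 2*r := by
    have hXγ : (γ/u * P) ^ γ = γ^γ / u^γ * (u*s)⁻¹ := by
      rw [Real.mul_rpow (by positivity) hP0, Real.div_rpow hγ0.le hu0.le, hPdef,
        ← Real.rpow_mul hus0.le, show -(1/γ) * γ = -1 from by field_simp,
        Real.rpow_neg_one]
    have hstep : (γ/u * P) ^ γ ≤ (2*r) ^ γ := by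
      rw [hXγ]
      have hpos : (0:ℝ) < u ^ γ := Real.rpow_pos_of_pos hu0 _
      rw [show γ^γ / u^γ * (u*s)⁻¹ = γ^γ / (u^γ * (u*s)) from by ring,
        div_le_iff₀ (by positivity)]
      rw [huu] at eA
      nlinarith [eA]
    exact (Real.rpow_le_rpow_iff (by positivity) (by linarith) hγ0).1 hstep
  intro t ht
  rcases eq_or_lt_of_le ht with rfl | ht'
  · rw [Real.zero_rpow (by positivity)]
    nlinarith
  · have hw : 1/u + γ/u = 1 := by field_simp; rw [hγdef]; ring
    have hg := Real.geom_mean_le_arith_mean2_weighted (by positivity) (by positivity)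
      (show (0:ℝ) ≤ u*s*t by positivity) hP0 hw
    have hPe : P ^ (γ/u) = (u*s) ^ (-(1/u)) := by
      rw [hPdef, ← Real.rpow_mul hus0.le]
      congr 1
      field_simp
    have hLHS : (u*s*t) ^ (1/u) * P ^ (γ/u) = t ^ (1/u) := by
      rw [hPe, Real.rpow_neg hus0.le, ← div_eq_mul_inv, ← Real.div_rpow (by positivity) hus0.le]
      congr 1
      field_simp
    rw [hLHS] at hg
    have hRHS : 1/u*(u*s*t) = s*t := by field_simp
    rw [hRHS] at hg
    linarith

/-- The twisted-union distance on `𝔽₂ⁿ × {0,1}` is a metric. -/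
theorem stmt_11 (n : ℕ) (α r s : ℝ) (hα : α ∈ Set.Ioc (1/2 : ℝ) 1) (hr : 0 < r) (hs : 0 < s)
    (hrs : ((2*α) ^ (2*α/(2*α-1)) - 1) ^ (2*α-1) ≤ (2*α) ^ (2*α) * s * (2*r) ^ (2*α-1))
    (d : (Fin n → ZMod 2) × Bool → (Fin n → ZMod 2) × Bool → ℝ)
    (hd : ∀ (x y : Fin n → ZMod 2) (i j : Bool), d (x, i) (y, j) =
      if i = j then
        (if i = true then
          min (s * (hammingDist x y : ℝ)) (2*r + (hammingDist x y : ℝ) ^ (1/(2*α)))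
        else (hammingDist x y : ℝ) ^ (1/(2*α)))
      else r + min (s * (hammingDist x y : ℝ)) ((hammingDist x y : ℝ) ^ (1/(2*α)))) :
    (∀ p, d p p = 0) ∧
    (∀ p q, 0 ≤ d p q) ∧
    (∀ p q, d p q = d q p) ∧
    (∀ p q, d p q = 0 → p = q) ∧
    (∀ p q w, d p w ≤ d p q + d q w) := by
  obtain ⟨hα1, hα2⟩ := hα
  have hkey : ∀ t : ℝ, 0 ≤ t → t ^ (1/(2*α)) ≤ 2*r + s*t := my_key α r s hα1 hr hs hrs
  set β : ℝ := 1/(2*α) with hβdef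
  have hβ0 : 0 < β := by rw [hβdef]; positivity
  have hβ1 : β ≤ 1 := by
    rw [hβdef, div_le_one (by linarith)]; linarith
  -- basic helpers
  have hGnn : ∀ t : ℝ, 0 ≤ t → 0 ≤ min (s*t) (t^β) := fun t ht =>
    le_min (by nlinarith) (Real.rpow_nonneg ht _)
  have hGmono : ∀ {C D : ℝ}, 0 ≤ C → C ≤ D → min (s*C) (C^β) ≤ min (s*D) (D^β) :=
    fun {C D} hC hCD => min_le_min (by nlinarith) (Real.rpow_le_rpow hC hCD hβ0.le)
  have hHmono : ∀ {C D : ℝ}, 0 ≤ C → C ≤ D →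
      min (s*C) (2*r + C^β) ≤ min (s*D) (2*r + D^β) :=
    fun {C D} hC hCD => min_le_min (by nlinarith)
      (by linarith [Real.rpow_le_rpow hC hCD hβ0.le])
  have hHle : ∀ t : ℝ, 0 ≤ t → min (s*t) (2*r + t^β) ≤ 2*r + min (s*t) (t^β) := by
    intro t ht
    rcases le_total (s*t) (t^β) with h | h
    · rw [min_eq_left h]; linarith [min_le_left (s*t) (2*r + t^β)]
    · rw [min_eq_right h]; linarith [min_le_right (s*t) (2*r + t^β)]
  have hPle : ∀ t : ℝ, 0 ≤ t → t^β ≤ 2*r + min (s*t) (t^β) := by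
    intro t ht
    rcases le_total (s*t) (t^β) with h | h
    · rw [min_eq_left h]; linarith [hkey t ht]
    · rw [min_eq_right h]; linarith
  refine ⟨?_, ?_, ?_, ?_, ?_⟩
  · -- d p p = 0
    rintro ⟨x, i⟩
    have h0 : (hammingDist x x : ℝ) = 0 := by simp
    rw [hd, h0]
    have hz : (0:ℝ) ^ β = 0 := Real.zero_rpow (ne_of_gt hβ0)
    cases i <;> simp [hz] <;> linarith
  · -- nonneg
    rintro ⟨x, i⟩ ⟨y, j⟩
    rw [hd]
    have hnn : (0:ℝ) ≤ (hammingDist x y : ℝ) := Nat.cast_nonneg _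
    split_ifs
    · exact le_min (by nlinarith) (by positivity)
    · positivity
    · have := hGnn _ hnn
      linarith
  · -- symm
    rintro ⟨x, i⟩ ⟨y, j⟩
    rw [hd, hd, hammingDist_comm y x]
    cases i <;> cases j <;> simp
  · -- d p q = 0 → p = q
    rintro ⟨x, i⟩ ⟨y, j⟩ h
    rw [hd] at h
    have hnn : (0:ℝ) ≤ (hammingDist x y : ℝ) := Nat.cast_nonneg _
    have hxy : ∀ (_ : hammingDist x y = 0), x = y := fun h' => hammingDist_eq_zero.1 h'
    cases i <;> cases j <;> simp only [Bool.false_eq_true, Bool.true_eq_false, reduceIte] at h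
    · -- false false
      have : (hammingDist x y : ℝ) = 0 := by
        by_contra hne
        have : (0:ℝ) < (hammingDist x y : ℝ) := lt_of_le_of_ne hnn (Ne.symm hne)
        have := Real.rpow_pos_of_pos this β
        linarith [h]
      have : hammingDist x y = 0 := by exact_mod_cast this
      rw [hxy this]
    · have := hGnn _ hnn
      exfalso; linarith
    · have := hGnn _ hnn
      exfalso; linarith
    · -- true true
      have hm : min (s * (hammingDist x y : ℝ)) (2*r + (hammingDist x y : ℝ)^β) = 0 := h
      have : (hammingDist x y : ℝ) = 0 := by
        rcases le_total (s * (hammingDist x y : ℝ)) (2*r + (hammingDist x y : ℝ)^β) with h' | h'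
        · rw [min_eq_left h'] at hm
          have := hm
          nlinarith
        · rw [min_eq_right h'] at hm
          have : (0:ℝ) ≤ (hammingDist x y : ℝ)^β := Real.rpow_nonneg hnn _
          exfalso; linarith
      have : hammingDist x y = 0 := by exact_mod_cast this
      rw [hxy this]
  · -- triangle
    rintro ⟨x, i⟩ ⟨y, j⟩ ⟨z, k⟩
    rw [hd, hd, hd]
    set A : ℝ := (hammingDist x y : ℝ) with hAdef
    set B : ℝ := (hammingDist y z : ℝ) with hBdef
    set C : ℝ := (hammingDist x z : ℝ) with hCdef
    have hA0 : 0 ≤ A := Nat.cast_nonneg _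
    have hB0 : 0 ≤ B := Nat.cast_nonneg _
    have hC0 : 0 ≤ C := Nat.cast_nonneg _
    have hT : C ≤ A + B := by
      rw [hAdef, hBdef, hCdef]
      exact_mod_cast hammingDist_triangle x y z
    cases i <;> cases j <;> cases k <;> simp only [Bool.false_eq_true, Bool.true_eq_false, reduceIte]
    · -- FFF : C^β ≤ A^β + B^β
      calc C^β ≤ (A+B)^β := Real.rpow_le_rpow hC0 hT hβ0.le
        _ ≤ A^β + B^β := my_subaddP hβ0.le hβ1 hA0 hB0
    · -- FFT : r + G C ≤ A^β + (r + G B)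
      have h1 : min (s*C) (C^β) ≤ min (s*A) (A^β) + min (s*B) (B^β) :=
        (hGmono hC0 hT).trans (my_Gsub hβ0 hβ1 hA0 hB0)
      have h2 : min (s*A) (A^β) ≤ A^β := min_le_right _ _
      linarith
    · -- FTF : C^β ≤ (r + G A) + (r + G B)
      have h1 : C^β ≤ 2*r + min (s*C) (C^β) := hPle C hC0
      have h2 : min (s*C) (C^β) ≤ min (s*A) (A^β) + min (s*B) (B^β) :=
        (hGmono hC0 hT).trans (my_Gsub hβ0 hβ1 hA0 hB0)
      linarith
    · -- FTT : r + G C ≤ (r + G A) + H B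
      have h1 : min (s*C) (C^β) ≤ min (s*A) (A^β) + min (s*B) (B^β) :=
        (hGmono hC0 hT).trans (my_Gsub hβ0 hβ1 hA0 hB0)
      have h2 : min (s*B) (B^β) ≤ min (s*B) (2*r + B^β) :=
        min_le_min le_rfl (by linarith [Real.rpow_nonneg hB0 β])
      linarith
    · -- TFF : r + G C ≤ (r + G A) + B^β
      have h1 : min (s*C) (C^β) ≤ min (s*A) (A^β) + min (s*B) (B^β) :=
        (hGmono hC0 hT).trans (my_Gsub hβ0 hβ1 hA0 hB0)
      have h2 : min (s*B) (B^β) ≤ B^β := min_le_right _ _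
      linarith
    · -- TFT : H C ≤ (r + G A) + (r + G B)
      have h1 : min (s*C) (2*r + C^β) ≤ 2*r + min (s*C) (C^β) := hHle C hC0
      have h2 : min (s*C) (C^β) ≤ min (s*A) (A^β) + min (s*B) (B^β) :=
        (hGmono hC0 hT).trans (my_Gsub hβ0 hβ1 hA0 hB0)
      linarith
    · -- TTF : r + G C ≤ H A + (r + G B)
      have h1 : min (s*C) (C^β) ≤ min (s*A) (A^β) + min (s*B) (B^β) :=
        (hGmono hC0 hT).trans (my_Gsub hβ0 hβ1 hA0 hB0)
      have h2 : min (s*A) (A^β) ≤ min (s*A) (2*r + A^β) :=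
        min_le_min le_rfl (by linarith [Real.rpow_nonneg hA0 β])
      linarith
    · -- TTT : H C ≤ H A + H B
      exact (hHmono hC0 hT).trans (my_Hsub hβ0 hβ1 hr hA0 hB0)
end

section
/- Let m ≥ 1, r ≥ 0, and consider the Euclidean unit ball B = B₂^m ⊂ ℝ^m. For any two points u, v ∈ ℝ^m with ‖u − v‖₂ = 2r, the volume of the union satisfies vol((u + B) ∪ (v + B)) ≤ v_m + 2r·v_{m−1}, where v_k is the volume of the k-dimensional Euclidean unit ball. Consequently, vol((u+B) Δ (v+B)) ≤ 2‖u−v‖₂·v_{m−1}. -/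
open MeasureTheory Metric Set

private lemma slice_subset (d q : ℝ) (hd : 0 ≤ d) (hq1 : q < 1) :
    {t : ℝ | t ^ 2 + q < 1 ∧ 1 ≤ (t - d) ^ 2 + q}
      ⊆ Set.Ioc (-(Real.sqrt (1 - q))) (d - Real.sqrt (1 - q)) := by
  intro t ht
  obtain ⟨h1, h2⟩ := ht
  set s : ℝ := Real.sqrt (1 - q) with hs
  have hs2 : s ^ 2 = 1 - q := Real.sq_sqrt (by linarith)
  have hs0 : 0 ≤ s := Real.sqrt_nonneg _
  have ht2 : t ^ 2 < s ^ 2 := by rw [hs2]; linarith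
  have hspos : 0 < s := by nlinarith [sq_nonneg t]
  have h2' : s ^ 2 ≤ (t - d) ^ 2 := by rw [hs2]; linarith
  constructor
  · nlinarith [sq_nonneg (t + s)]
  · by_contra hcon
    push_neg at hcon
    have h4 : 0 < t - d + s := by linarith
    have h3 : 0 ≤ (t - d - s) * (t - d + s) := by nlinarith
    have h5 : s ≤ t - d := by nlinarith
    nlinarith

private lemma slice_empty (d q : ℝ) (hq : 1 ≤ q) :
    {t : ℝ | t ^ 2 + q < 1 ∧ 1 ≤ (t - d) ^ 2 + q} = ∅ := by
  ext t
  simp only [mem_setOf_eq, mem_empty_iff_false, iff_false, not_and]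
  intro h
  exfalso
  nlinarith [sq_nonneg t]

private lemma ball_pi_volume (n : ℕ) :
    volume {y : Fin n → ℝ | ∑ j, y j ^ 2 < 1}
      = volume (ball (0 : EuclideanSpace ℝ (Fin n)) 1) := by
  have hkey : {y : Fin n → ℝ | ∑ j, y j ^ 2 < 1}
      = (MeasurableEquiv.toLp 2 (Fin n → ℝ)) ⁻¹'
        (ball (0 : EuclideanSpace ℝ (Fin n)) 1) := by
    ext y
    simp only [mem_setOf_eq, mem_preimage, mem_ball, dist_zero_right]
    rw [EuclideanSpace.norm_eq]
    have h : ∀ i, ‖(MeasurableEquiv.toLp 2 (Fin n → ℝ)) y i‖ ^ 2 = y i ^ 2 := by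
      intro i
      rw [Real.norm_eq_abs, sq_abs]
      rfl
    rw [Finset.sum_congr rfl (fun i _ => h i), Real.sqrt_lt' one_pos, one_pow]
  rw [hkey, MeasurableEquiv.coe_toLp, (PiLp.volume_preserving_toLp (Fin n)).measure_preimage
    measurableSet_ball.nullMeasurableSet]

private lemma A_measurable (n : ℕ) (d : ℝ) :
    MeasurableSet {p : ℝ × (Fin n → ℝ) |
      p.1 ^ 2 + ∑ j, p.2 j ^ 2 < 1 ∧ 1 ≤ (p.1 - d) ^ 2 + ∑ j, p.2 j ^ 2} := by
  have hsum : Measurable (fun p : ℝ × (Fin n → ℝ) => ∑ j, p.2 j ^ 2) :=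
    Finset.measurable_sum Finset.univ fun j _ =>
      ((measurable_pi_apply j).comp measurable_snd).pow_const 2
  have h1 : Measurable (fun p : ℝ × (Fin n → ℝ) => p.1 ^ 2 + ∑ j, p.2 j ^ 2) :=
    (measurable_fst.pow_const 2).add hsum
  have h2 : Measurable (fun p : ℝ × (Fin n → ℝ) => (p.1 - d) ^ 2 + ∑ j, p.2 j ^ 2) :=
    ((measurable_fst.sub measurable_const).pow_const 2).add hsum
  exact (measurableSet_lt h1 measurable_const).inter (measurableSet_le measurable_const h2)

private lemma prod_bound (n : ℕ) (d : ℝ) (hd : 0 ≤ d) :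
    volume {p : ℝ × (Fin n → ℝ) |
        p.1 ^ 2 + ∑ j, p.2 j ^ 2 < 1 ∧ 1 ≤ (p.1 - d) ^ 2 + ∑ j, p.2 j ^ 2}
      ≤ ENNReal.ofReal d * volume (ball (0 : EuclideanSpace ℝ (Fin n)) 1) := by
  have hB1meas : MeasurableSet {y : Fin n → ℝ | ∑ j, y j ^ 2 < 1} :=
    measurableSet_lt (Finset.measurable_sum Finset.univ fun j _ =>
      (measurable_pi_apply j).pow_const 2) measurable_const
  rw [Measure.volume_eq_prod, Measure.prod_apply_symm (A_measurable n d)]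
  have hslice : ∀ y : Fin n → ℝ,
      volume ((fun t => (t, y)) ⁻¹' {p : ℝ × (Fin n → ℝ) |
          p.1 ^ 2 + ∑ j, p.2 j ^ 2 < 1 ∧ 1 ≤ (p.1 - d) ^ 2 + ∑ j, p.2 j ^ 2})
        ≤ ({y : Fin n → ℝ | ∑ j, y j ^ 2 < 1}).indicator (fun _ => ENNReal.ofReal d) y := by
    intro y
    have hpre : (fun t => (t, y)) ⁻¹' {p : ℝ × (Fin n → ℝ) |
          p.1 ^ 2 + ∑ j, p.2 j ^ 2 < 1 ∧ 1 ≤ (p.1 - d) ^ 2 + ∑ j, p.2 j ^ 2}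
        = {t : ℝ | t ^ 2 + (∑ j, y j ^ 2) < 1 ∧ 1 ≤ (t - d) ^ 2 + (∑ j, y j ^ 2)} := rfl
    rw [hpre]
    by_cases hq1 : (∑ j, y j ^ 2) < 1
    · calc volume {t : ℝ | t ^ 2 + (∑ j, y j ^ 2) < 1 ∧ 1 ≤ (t - d) ^ 2 + (∑ j, y j ^ 2)}
          ≤ volume (Set.Ioc (-(Real.sqrt (1 - ∑ j, y j ^ 2)))
              (d - Real.sqrt (1 - ∑ j, y j ^ 2))) :=
            measure_mono (slice_subset d _ hd hq1)
        _ = ENNReal.ofReal d := by rw [Real.volume_Ioc]; congr 1; ring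
        _ = _ := (Set.indicator_of_mem (show y ∈ {y : Fin n → ℝ | ∑ j, y j ^ 2 < 1} from hq1) (fun _ => ENNReal.ofReal d)).symm
    · rw [slice_empty d _ (le_of_not_gt hq1), measure_empty]
      exact zero_le
  calc ∫⁻ y, volume ((fun t => (t, y)) ⁻¹' _) ∂volume
      ≤ ∫⁻ y, ({y : Fin n → ℝ | ∑ j, y j ^ 2 < 1}).indicator
          (fun _ => ENNReal.ofReal d) y ∂volume := lintegral_mono hslice
    _ = ENNReal.ofReal d * volume {y : Fin n → ℝ | ∑ j, y j ^ 2 < 1} := by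
        rw [lintegral_indicator hB1meas, setLIntegral_const]
    _ = ENNReal.ofReal d * volume (ball (0 : EuclideanSpace ℝ (Fin n)) 1) := by
        rw [ball_pi_volume n]

private lemma diff_bound (n : ℕ) (u v : EuclideanSpace ℝ (Fin (n+1))) :
    volume (ball u 1 \ ball v 1) ≤
      ENNReal.ofReal (dist u v) * volume (ball (0 : EuclideanSpace ℝ (Fin n)) 1) := by
  have hd0 : (0:ℝ) ≤ dist u v := dist_nonneg
  -- translate
  have htrans : ball u 1 \ ball v 1
      = (fun x => x + (-u)) ⁻¹' (ball (0 : EuclideanSpace ℝ (Fin (n+1))) 1 \ ball (v - u) 1) := by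
    ext x
    simp only [mem_diff, mem_preimage, mem_ball]
    have e1 : dist (x + -u) (0 : EuclideanSpace ℝ (Fin (n+1))) = dist x u := by
      rw [dist_zero_right, ← sub_eq_add_neg, ← dist_eq_norm]
    have e2 : dist (x + -u) (v - u) = dist x v := by
      rw [dist_eq_norm, show x + -u - (v - u) = x - v by abel, ← dist_eq_norm]
    rw [e1, e2]
  rw [htrans, measure_preimage_add_right]
  -- rotate
  have hc : ‖EuclideanSpace.single (0 : Fin (n+1)) (dist u v)‖ = dist u v := by
    rw [EuclideanSpace.norm_single, Real.norm_eq_abs, abs_of_nonneg hd0]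
  have hw : ‖v - u‖ = dist u v := by rw [← dist_eq_norm, dist_comm]
  set f := Submodule.reflection (ℝ ∙ ((v - u) - EuclideanSpace.single (0 : Fin (n+1)) (dist u v)))ᗮ
    with hfdef
  have hfw : f (v - u) = EuclideanSpace.single (0 : Fin (n+1)) (dist u v) :=
    Submodule.reflection_sub (by rw [hw, hc])
  have hrot : ball (0 : EuclideanSpace ℝ (Fin (n+1))) 1 \ ball (v - u) 1
      = f ⁻¹' (ball (0 : EuclideanSpace ℝ (Fin (n+1))) 1
          \ ball (EuclideanSpace.single (0 : Fin (n+1)) (dist u v)) 1) := by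
    ext x
    simp only [mem_diff, mem_preimage, mem_ball]
    rw [← hfw, dist_zero_right, dist_zero_right, f.norm_map, f.dist_map]
  rw [hrot, f.measurePreserving.measure_preimage
    ((measurableSet_ball.diff measurableSet_ball).nullMeasurableSet)]
  -- coordinates
  have hT : MeasurePreserving (fun x : EuclideanSpace ℝ (Fin (n+1)) =>
      (MeasurableEquiv.piFinSuccAbove (fun _ : Fin (n+1) => ℝ) 0)
        ((MeasurableEquiv.toLp 2 (Fin (n+1) → ℝ)).symm x)) volume volume :=
    (volume_preserving_piFinSuccAbove (fun _ : Fin (n+1) => ℝ) 0).comp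
      (EuclideanSpace.volume_preserving_symm_measurableEquiv_toLp (Fin (n+1)))
  have hTx : ∀ x : EuclideanSpace ℝ (Fin (n+1)),
      (MeasurableEquiv.piFinSuccAbove (fun _ : Fin (n+1) => ℝ) 0)
        ((MeasurableEquiv.toLp 2 (Fin (n+1) → ℝ)).symm x) = (x 0, fun j : Fin n => x j.succ) := by
    intro x
    simp [MeasurableEquiv.piFinSuccAbove_apply, MeasurableEquiv.toLp,
      Fin.zero_succAbove, Fin.tail]
    exact ⟨rfl, rfl⟩
  have hset : ball (0 : EuclideanSpace ℝ (Fin (n+1))) 1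
        \ ball (EuclideanSpace.single (0 : Fin (n+1)) (dist u v)) 1
      = (fun x : EuclideanSpace ℝ (Fin (n+1)) =>
          (MeasurableEquiv.piFinSuccAbove (fun _ : Fin (n+1) => ℝ) 0)
            ((MeasurableEquiv.toLp 2 (Fin (n+1) → ℝ)).symm x)) ⁻¹'
        {p : ℝ × (Fin n → ℝ) |
          p.1 ^ 2 + ∑ j, p.2 j ^ 2 < 1 ∧ 1 ≤ (p.1 - dist u v) ^ 2 + ∑ j, p.2 j ^ 2} := by
    ext x
    simp only [mem_diff, mem_preimage, mem_ball, mem_setOf_eq, hTx x, not_lt]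
    have hnorm : dist x 0 = Real.sqrt ((x 0) ^ 2 + ∑ j : Fin n, (x j.succ) ^ 2) := by
      rw [EuclideanSpace.dist_eq, Fin.sum_univ_succ]
      simp [Real.dist_eq, sq_abs]
    have hdistc : dist x (EuclideanSpace.single (0 : Fin (n+1)) (dist u v))
        = Real.sqrt ((x 0 - dist u v) ^ 2 + ∑ j : Fin n, (x j.succ) ^ 2) := by
      rw [EuclideanSpace.dist_eq, Fin.sum_univ_succ]
      simp [EuclideanSpace.single_apply, Fin.succ_ne_zero, Real.dist_eq, sq_abs]
    rw [hnorm, hdistc, Real.sqrt_lt' one_pos, Real.one_le_sqrt, one_pow]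
  rw [hset, hT.measure_preimage (A_measurable n (dist u v)).nullMeasurableSet]
  exact prod_bound n (dist u v) hd0

open MeasureTheory in
/-- Volume bounds for the union and symmetric difference of two translated Euclidean
unit balls at distance `2r`. -/
theorem stmt_16 (m : ℕ) (hm : 1 ≤ m) (r : ℝ) (hr : 0 ≤ r)
    (u v : EuclideanSpace ℝ (Fin m)) (huv : dist u v = 2 * r) :
    volume (Metric.ball u 1 ∪ Metric.ball v 1) ≤
        volume (Metric.ball (0 : EuclideanSpace ℝ (Fin m)) 1) +
          ENNReal.ofReal (2 * r) * volume (Metric.ball (0 : EuclideanSpace ℝ (Fin (m - 1))) 1) ∧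
    volume (symmDiff (Metric.ball u 1) (Metric.ball v 1)) ≤
        ENNReal.ofReal (2 * dist u v) *
          volume (Metric.ball (0 : EuclideanSpace ℝ (Fin (m - 1))) 1) := by
  obtain ⟨n, rfl⟩ : ∃ n, m = n + 1 := ⟨m - 1, by omega⟩
  simp only [Nat.add_one_sub_one]
  have h1 : volume (ball u 1 \ ball v 1)
      ≤ ENNReal.ofReal (dist u v) * volume (ball (0 : EuclideanSpace ℝ (Fin n)) 1) :=
    diff_bound n u v
  have h2 : volume (ball v 1 \ ball u 1)
      ≤ ENNReal.ofReal (dist u v) * volume (ball (0 : EuclideanSpace ℝ (Fin n)) 1) := by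
    rw [dist_comm]
    exact diff_bound n v u
  constructor
  · calc volume (ball u 1 ∪ ball v 1)
        = volume (ball u 1 ∪ (ball v 1 \ ball u 1)) := by rw [union_diff_self]
      _ ≤ volume (ball u 1) + volume (ball v 1 \ ball u 1) := measure_union_le _ _
      _ ≤ volume (ball (0 : EuclideanSpace ℝ (Fin (n+1))) 1)
            + ENNReal.ofReal (2 * r) * volume (ball (0 : EuclideanSpace ℝ (Fin n)) 1) := by
          refine add_le_add ?_ ?_
          · rw [Measure.addHaar_ball_center]
          · rw [← huv]; exact h2
  · calc volume (symmDiff (ball u 1) (ball v 1))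
        = volume ((ball u 1 \ ball v 1) ∪ (ball v 1 \ ball u 1)) := by
          rw [Set.symmDiff_def]
      _ ≤ volume (ball u 1 \ ball v 1) + volume (ball v 1 \ ball u 1) := measure_union_le _ _
      _ ≤ ENNReal.ofReal (dist u v) * volume (ball (0 : EuclideanSpace ℝ (Fin n)) 1)
            + ENNReal.ofReal (dist u v) * volume (ball (0 : EuclideanSpace ℝ (Fin n)) 1) :=
          add_le_add h1 h2
      _ = ENNReal.ofReal (2 * dist u v) * volume (ball (0 : EuclideanSpace ℝ (Fin n)) 1) := by
          rw [two_mul, ENNReal.ofReal_add dist_nonneg dist_nonneg, add_mul]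
end
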